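/- For every symmetric 3×3 real matrix A and every R ∈ SO(3), ⟨ψ(R), ψ(AR)⟩ = ψ(R)ᵀ Ā ψ(R), where Ā := (1/2)(tr(A)·I − A). -/
import Mathlib


open Matrix

/-- `R ∈ SO(3)`: `R Rᵀ = I` and `det R = 1`. -/
def IsSO3 (R : Matrix (Fin 3) (Fin 3) ℝ) : Prop := R * Rᵀ = 1 ∧ R.det = 1

/-- `ψ(A) = vex(P_a(A))` where `P_a(A) = (A - Aᵀ)/2`. -/
noncomputable def psi (A : Matrix (Fin 3) (Fin 3) ℝ) : Fin 3 → ℝ :=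
  ![(A 2 1 - A 1 2)/2, (A 0 2 - A 2 0)/2, (A 1 0 - A 0 1)/2]

/-- `Ā = (1/2)(tr(A)·I - A)`. -/
noncomputable def abar (A : Matrix (Fin 3) (Fin 3) ℝ) : Matrix (Fin 3) (Fin 3) ℝ :=
  (1/2 : ℝ) • (Matrix.trace A • (1 : Matrix (Fin 3) (Fin 3) ℝ) - A)

/-- For symmetric `A` and `R ∈ SO(3)`: `⟨ψ(R), ψ(AR)⟩ = ψ(R)ᵀ Ā ψ(R)`. -/
theorem stmt5 (A R : Matrix (Fin 3) (Fin 3) ℝ) (hA : Aᵀ = A) (hR : IsSO3 R) :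
    psi R ⬝ᵥ psi (A * R) = psi R ⬝ᵥ (abar A).mulVec (psi R) := by
  obtain ⟨h1, hd⟩ := hR
  have hadj : Rᵀ = R.adjugate := by
    have h2 : R * R.adjugate = 1 := by rw [Matrix.mul_adjugate, hd, one_smul]
    exact Matrix.right_inv_eq_right_inv h1 h2
  have e00 : R 0 0 * R 0 0 + R 0 1 * R 0 1 + R 0 2 * R 0 2 = 1 := by
    have := congrFun (congrFun h1 0) 0
    simpa [Matrix.mul_apply, Fin.sum_univ_three, Matrix.one_apply] using this
  have e01 : R 0 0 * R 1 0 + R 0 1 * R 1 1 + R 0 2 * R 1 2 = 0 := by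
    have := congrFun (congrFun h1 0) 1
    simpa [Matrix.mul_apply, Fin.sum_univ_three, Matrix.one_apply] using this
  have e02 : R 0 0 * R 2 0 + R 0 1 * R 2 1 + R 0 2 * R 2 2 = 0 := by
    have := congrFun (congrFun h1 0) 2
    simpa [Matrix.mul_apply, Fin.sum_univ_three, Matrix.one_apply] using this
  have e10 : R 1 0 * R 0 0 + R 1 1 * R 0 1 + R 1 2 * R 0 2 = 0 := by
    have := congrFun (congrFun h1 1) 0
    simpa [Matrix.mul_apply, Fin.sum_univ_three, Matrix.one_apply] using this
  have e11 : R 1 0 * R 1 0 + R 1 1 * R 1 1 + R 1 2 * R 1 2 = 1 := by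
    have := congrFun (congrFun h1 1) 1
    simpa [Matrix.mul_apply, Fin.sum_univ_three, Matrix.one_apply] using this
  have e12 : R 1 0 * R 2 0 + R 1 1 * R 2 1 + R 1 2 * R 2 2 = 0 := by
    have := congrFun (congrFun h1 1) 2
    simpa [Matrix.mul_apply, Fin.sum_univ_three, Matrix.one_apply] using this
  have e20 : R 2 0 * R 0 0 + R 2 1 * R 0 1 + R 2 2 * R 0 2 = 0 := by
    have := congrFun (congrFun h1 2) 0
    simpa [Matrix.mul_apply, Fin.sum_univ_three, Matrix.one_apply] using this
  have e21 : R 2 0 * R 1 0 + R 2 1 * R 1 1 + R 2 2 * R 1 2 = 0 := by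
    have := congrFun (congrFun h1 2) 1
    simpa [Matrix.mul_apply, Fin.sum_univ_three, Matrix.one_apply] using this
  have e22 : R 2 0 * R 2 0 + R 2 1 * R 2 1 + R 2 2 * R 2 2 = 1 := by
    have := congrFun (congrFun h1 2) 2
    simpa [Matrix.mul_apply, Fin.sum_univ_three, Matrix.one_apply] using this
  have hc00 : R 0 0 = R 1 1 * R 2 2 - R 1 2 * R 2 1 := by
    have := congrFun (congrFun hadj 0) 0
    simpa [Matrix.adjugate_fin_three] using this
  have hc01 : R 0 1 = -(R 1 0 * R 2 2) + R 1 2 * R 2 0 := by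
    have := congrFun (congrFun hadj 1) 0
    simpa [Matrix.adjugate_fin_three] using this
  have hc02 : R 0 2 = R 1 0 * R 2 1 - R 1 1 * R 2 0 := by
    have := congrFun (congrFun hadj 2) 0
    simpa [Matrix.adjugate_fin_three] using this
  have hc10 : R 1 0 = -(R 0 1 * R 2 2) + R 0 2 * R 2 1 := by
    have := congrFun (congrFun hadj 0) 1
    simpa [Matrix.adjugate_fin_three] using this
  have hc11 : R 1 1 = R 0 0 * R 2 2 - R 0 2 * R 2 0 := by
    have := congrFun (congrFun hadj 1) 1
    simpa [Matrix.adjugate_fin_three] using this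
  have hc12 : R 1 2 = -(R 0 0 * R 2 1) + R 0 1 * R 2 0 := by
    have := congrFun (congrFun hadj 2) 1
    simpa [Matrix.adjugate_fin_three] using this
  have hc20 : R 2 0 = R 0 1 * R 1 2 - R 0 2 * R 1 1 := by
    have := congrFun (congrFun hadj 0) 2
    simpa [Matrix.adjugate_fin_three] using this
  have hc21 : R 2 1 = -(R 0 0 * R 1 2) + R 0 2 * R 1 0 := by
    have := congrFun (congrFun hadj 1) 2
    simpa [Matrix.adjugate_fin_three] using this
  have hc22 : R 2 2 = R 0 0 * R 1 1 - R 0 1 * R 1 0 := by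
    have := congrFun (congrFun hadj 2) 2
    simpa [Matrix.adjugate_fin_three] using this
  have hdet : R 0 0 * (R 1 1 * R 2 2) - R 0 0 * (R 1 2 * R 2 1) - R 0 1 * (R 1 0 * R 2 2)
      + R 0 1 * (R 1 2 * R 2 0) + R 0 2 * (R 1 0 * R 2 1) - R 0 2 * (R 1 1 * R 2 0) = 1 := by
    rw [← hd, Matrix.det_fin_three]; ring
  have s10 : A 0 1 = A 1 0 := congrFun (congrFun hA 1) 0
  have s20 : A 0 2 = A 2 0 := congrFun (congrFun hA 2) 0
  have s21 : A 1 2 = A 2 1 := congrFun (congrFun hA 2) 1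
  simp only [psi, abar, dotProduct, Matrix.mulVec, Matrix.mul_apply, Fin.sum_univ_three,
    Matrix.trace_fin_three, Matrix.smul_apply, Matrix.sub_apply, Matrix.one_fin_three,
    Matrix.cons_val', Matrix.cons_val_zero, Matrix.cons_val_one, Matrix.head_cons,
    Matrix.cons_val_fin_one, Matrix.head_fin_const, Matrix.empty_val',
    smul_eq_mul, Matrix.cons_val_two, Matrix.tail_cons, Matrix.of_apply]
  rw [← s10, ← s20, ← s21] at *
  linear_combination
    (1/8 : ℝ) * A 0 0 * e00 +
    (1/8 : ℝ) * A 0 1 * e10 +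
    (1/8 : ℝ) * A 0 2 * e20 +
    (1/8 : ℝ) * A 0 1 * e01 +
    (1/8 : ℝ) * A 1 1 * e11 +
    (1/8 : ℝ) * A 1 2 * e21 +
    (1/8 : ℝ) * A 0 2 * e02 +
    (1/8 : ℝ) * A 1 2 * e12 +
    (1/8 : ℝ) * A 2 2 * e22 +
    (-(1/8) : ℝ) * (A 0 0 + A 1 1 + A 2 2) * hdet +
    (-(1/8) : ℝ) * (A 0 0 * R 0 0 + A 0 1 * R 0 1 + A 0 2 * R 0 2) * hc00 +
    (-(1/8) : ℝ) * (A 0 1 * R 0 0 + A 1 1 * R 0 1 + A 1 2 * R 0 2) * hc01 +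
    (-(1/8) : ℝ) * (A 0 2 * R 0 0 + A 1 2 * R 0 1 + A 2 2 * R 0 2) * hc02 +
    (-(1/8) : ℝ) * (A 0 0 * R 1 0 + A 0 1 * R 1 1 + A 0 2 * R 1 2) * hc10 +
    (-(1/8) : ℝ) * (A 0 1 * R 1 0 + A 1 1 * R 1 1 + A 1 2 * R 1 2) * hc11 +
    (-(1/8) : ℝ) * (A 0 2 * R 1 0 + A 1 2 * R 1 1 + A 2 2 * R 1 2) * hc12 +
    (-(1/8) : ℝ) * (A 0 0 * R 2 0 + A 0 1 * R 2 1 + A 0 2 * R 2 2) * hc20 +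
    (-(1/8) : ℝ) * (A 0 1 * R 2 0 + A 1 1 * R 2 1 + A 1 2 * R 2 2) * hc21 +
    (-(1/8) : ℝ) * (A 0 2 * R 2 0 + A 1 2 * R 2 1 + A 2 2 * R 2 2) * hc22
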